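/- Adopt the Carleman weight setup, let 0 ≤ T' ≤ T, and assume in addition that θ is monotone nonincreasing on [0,T'] and 1 ≤ θ(t) ≤ 2 for all t ∈ [0,T']. Set ℵ(t,x) := ξ(t,x)^{−2} · exp(s·φ(t,x)) with s > 0. Let δ ≥ 0 and let 0 ≤ τ ≤ t ≤ T' and x ∈ ℝ² be such that |X̂(τ,t,x) − X̄(τ,t,x)| ≤ δ. Then ℵ(t,x) ≤ 4 · exp(2(s+1) · λ · K · exp(λ(6m+1)) · δ) · ℵ(τ, X̂(τ,t,x)). -/
import Mathlib


/-- The Carleman weight `φ(t,x) = θ(t)(λ e^{6λ(m+1)} − e^{λψ(t,x)})`. -/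
noncomputable def phiW (θ : ℝ → ℝ) (ψ : ℝ → EuclideanSpace ℝ (Fin 2) → ℝ) (m lam t : ℝ)
    (x : EuclideanSpace ℝ (Fin 2)) : ℝ :=
  θ t * (lam * Real.exp (6*lam*(m+1)) - Real.exp (lam * ψ t x))

/-- The Carleman weight `ξ(t,x) = θ(t) e^{λψ(t,x)}`. -/
noncomputable def xiW (θ : ℝ → ℝ) (ψ : ℝ → EuclideanSpace ℝ (Fin 2) → ℝ) (lam t : ℝ)
    (x : EuclideanSpace ℝ (Fin 2)) : ℝ :=
  θ t * Real.exp (lam * ψ t x)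

/-- The weight `ℵ(t,x) = ξ(t,x)^{-2} e^{s φ(t,x)}`. -/
noncomputable def alephW (θ : ℝ → ℝ) (ψ : ℝ → EuclideanSpace ℝ (Fin 2) → ℝ) (m lam s t : ℝ)
    (x : EuclideanSpace ℝ (Fin 2)) : ℝ :=
  ((xiW θ ψ lam t x)^2)⁻¹ * Real.exp (s * phiW θ ψ m lam t x)

lemma exp_sub_exp_le' {a b c : ℝ} (ha : a ≤ c) :
    Real.exp a - Real.exp b ≤ Real.exp c * |a - b| := by
  rcases le_total a b with h | h
  · have h1 : Real.exp a ≤ Real.exp b := Real.exp_le_exp.mpr h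
    have h2 : (0:ℝ) ≤ Real.exp c * |a - b| := by positivity
    linarith
  · have h1 : b - a + 1 ≤ Real.exp (b - a) := Real.add_one_le_exp (b - a)
    have he : Real.exp a * Real.exp (b - a) = Real.exp b := by
      rw [← Real.exp_add]; ring_nf
    have h2 : Real.exp a * (1 + (b - a)) ≤ Real.exp b := by
      nlinarith [Real.exp_pos a, mul_le_mul_of_nonneg_left h1 (Real.exp_pos a).le]
    have h3 : Real.exp a ≤ Real.exp c := Real.exp_le_exp.mpr ha
    have h4 : Real.exp a - Real.exp b ≤ Real.exp a * (a - b) := by nlinarith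
    have h5 : Real.exp a * (a - b) ≤ Real.exp c * (a - b) := by nlinarith
    rw [abs_of_nonneg (by linarith : (0:ℝ) ≤ a - b)]
    linarith

lemma alephW_eq (θ : ℝ → ℝ) (ψ : ℝ → EuclideanSpace ℝ (Fin 2) → ℝ) (m lam s u : ℝ)
    (y : EuclideanSpace ℝ (Fin 2)) :
    alephW θ ψ m lam s u y
      = ((θ u)^2)⁻¹ * Real.exp (s * phiW θ ψ m lam u y - 2*(lam * ψ u y)) := by
  have h2 : Real.exp (2*(lam * ψ u y)) = (Real.exp (lam * ψ u y))^2 := by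
    rw [two_mul, Real.exp_add, sq]
  unfold alephW xiW
  rw [Real.exp_sub, h2, mul_pow, mul_inv, div_eq_mul_inv]
  ring

set_option maxHeartbeats 1000000 in
/-- The case `τ ≤ t ≤ T − 2T₁` of Proposition 4.5 of the paper, with explicit constant:
if `θ` is nonincreasing and valued in `[1,2]` on `[0,T']`, then for `0 ≤ τ ≤ t ≤ T'`,
`ℵ(t,x) ≤ 4 e^{2(s+1) λ K e^{λ(6m+1)} δ} ℵ(τ, X̂(τ,t,x))` whenever
`|X̂(τ,t,x) − X̄(τ,t,x)| ≤ δ`. -/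
theorem stmt_10
    (T m lam K : ℝ) (hT : 0 < T) (hm : 1 ≤ m) (hlam : 1 ≤ lam) (hK : 0 ≤ K)
    (θ : ℝ → ℝ) (hθ1 : ∀ t ∈ Set.Icc (0:ℝ) T, 1 ≤ θ t)
    (ψ : ℝ → EuclideanSpace ℝ (Fin 2) → ℝ)
    (hψlb : ∀ t ∈ Set.Icc (0:ℝ) T, ∀ x, 6*m ≤ ψ t x)
    (hψub : ∀ t ∈ Set.Icc (0:ℝ) T, ∀ x, ψ t x ≤ 6*m + 1)
    (hψlip : ∀ t ∈ Set.Icc (0:ℝ) T, ∀ x x', |ψ t x - ψ t x'| ≤ K * ‖x - x'‖)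
    (Xbar Xhat : ℝ → ℝ → EuclideanSpace ℝ (Fin 2) → EuclideanSpace ℝ (Fin 2))
    (htransport : ∀ t ∈ Set.Icc (0:ℝ) T, ∀ τ ∈ Set.Icc (0:ℝ) T, ∀ x,
      ψ τ (Xbar τ t x) = ψ t x)
    (T' : ℝ) (hT'0 : 0 ≤ T') (hT'T : T' ≤ T)
    (hθanti : AntitoneOn θ (Set.Icc 0 T'))
    (hθ12 : ∀ t ∈ Set.Icc (0:ℝ) T', 1 ≤ θ t ∧ θ t ≤ 2)
    (s : ℝ) (hs : 0 < s)
    (δ : ℝ) (hδ : 0 ≤ δ)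
    (τ t : ℝ) (hτ0 : 0 ≤ τ) (hτt : τ ≤ t) (htT' : t ≤ T')
    (x : EuclideanSpace ℝ (Fin 2))
    (hclose : ‖Xhat τ t x - Xbar τ t x‖ ≤ δ) :
    alephW θ ψ m lam s t x
      ≤ 4 * Real.exp (2 * (s+1) * lam * K * Real.exp (lam*(6*m+1)) * δ)
        * alephW θ ψ m lam s τ (Xhat τ t x) := by
  have hτT : τ ∈ Set.Icc (0:ℝ) T := ⟨hτ0, by linarith⟩
  have htT : t ∈ Set.Icc (0:ℝ) T := ⟨by linarith, by linarith⟩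
  have hτT' : τ ∈ Set.Icc (0:ℝ) T' := ⟨hτ0, by linarith⟩
  have htT'' : t ∈ Set.Icc (0:ℝ) T' := ⟨by linarith, htT'⟩
  obtain ⟨hθτ1, hθτ2⟩ := hθ12 τ hτT'
  obtain ⟨hθt1, hθt2⟩ := hθ12 t htT''
  have hθmono : θ t ≤ θ τ := hθanti hτT' htT'' hτt
  set X := Xhat τ t x with hX
  have hψdiff : |ψ τ X - ψ t x| ≤ K * δ := by
    have h1 := hψlip τ hτT X (Xbar τ t x)
    have h2 := htransport t htT τ hτT x
    rw [h2] at h1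
    exact h1.trans (mul_le_mul_of_nonneg_left hclose hK)
  have hlam0 : (0:ℝ) < lam := by linarith
  have hψtub := hψub t htT x
  have hψτub := hψub τ hτT X
  set Eexp := Real.exp (lam*(6*m+1)) with hE
  have hEexp1 : (1:ℝ) ≤ Eexp := by
    rw [hE]; exact Real.one_le_exp (by nlinarith)
  have hEt : Real.exp (lam * ψ t x) ≤ Eexp := by
    rw [hE]; exact Real.exp_le_exp.mpr (by nlinarith)
  have hLam : Eexp ≤ lam * Real.exp (6*lam*(m+1)) := by
    have h1 : Eexp ≤ Real.exp (6*lam*(m+1)) := by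
      rw [hE]; exact Real.exp_le_exp.mpr (by nlinarith)
    nlinarith [Real.exp_pos (6*lam*(m+1))]
  have hc3 : Real.exp (lam * ψ τ X) - Real.exp (lam * ψ t x) ≤ Eexp * (lam * (K * δ)) := by
    have h1 : lam * ψ τ X ≤ lam*(6*m+1) := by nlinarith
    have h2 := exp_sub_exp_le' (b := lam * ψ t x) (c := lam*(6*m+1)) h1
    have h3 : |lam * ψ τ X - lam * ψ t x| ≤ lam * (K * δ) := by
      rw [show lam * ψ τ X - lam * ψ t x = lam * (ψ τ X - ψ t x) by ring,
        abs_mul, abs_of_pos hlam0]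
      exact mul_le_mul_of_nonneg_left hψdiff hlam0.le
    calc Real.exp (lam * ψ τ X) - Real.exp (lam * ψ t x)
        ≤ Eexp * |lam * ψ τ X - lam * ψ t x| := h2
      _ ≤ Eexp * (lam * (K * δ)) := mul_le_mul_of_nonneg_left h3 (by positivity)
  -- exponent inequality
  have hexpineq : s * phiW θ ψ m lam t x - 2*(lam * ψ t x)
      ≤ 2 * (s+1) * lam * K * Eexp * δ
        + (s * phiW θ ψ m lam τ X - 2*(lam * ψ τ X)) := by
    have habs := abs_le.mp hψdiff
    have hφdiff : s * (phiW θ ψ m lam t x - phiW θ ψ m lam τ X)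
        ≤ 2 * s * lam * K * Eexp * δ := by
      unfold phiW
      have key : θ t * (lam * Real.exp (6*lam*(m+1)) - Real.exp (lam * ψ t x))
          - θ τ * (lam * Real.exp (6*lam*(m+1)) - Real.exp (lam * ψ τ X))
          = (θ τ - θ t) * (Real.exp (lam * ψ t x) - lam * Real.exp (6*lam*(m+1)))
            + θ τ * (Real.exp (lam * ψ τ X) - Real.exp (lam * ψ t x)) := by ring
      rw [mul_sub, ← mul_sub, key]
      have h1 : (θ τ - θ t) * (Real.exp (lam * ψ t x) - lam * Real.exp (6*lam*(m+1))) ≤ 0 := by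
        have := mul_nonneg (sub_nonneg.2 hθmono) (sub_nonneg.2 (hEt.trans hLam))
        nlinarith [this]
      have hR : (0:ℝ) ≤ Eexp * (lam * (K * δ)) := by positivity
      have h2 : θ τ * (Real.exp (lam * ψ τ X) - Real.exp (lam * ψ t x))
          ≤ 2 * (Eexp * (lam * (K * δ))) := by
        rcases le_total (Real.exp (lam * ψ τ X) - Real.exp (lam * ψ t x)) 0 with h | h
        · linarith [mul_le_mul_of_nonneg_left h (by linarith : (0:ℝ) ≤ θ τ)]
        · linarith [mul_le_mul_of_nonneg_right hθτ2 h]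
      have h3 : s * ((θ τ - θ t) * (Real.exp (lam * ψ t x) - lam * Real.exp (6*lam*(m+1)))) ≤ 0 := by
        linarith [mul_le_mul_of_nonneg_left h1 hs.le]
      have h4 : s * (θ τ * (Real.exp (lam * ψ τ X) - Real.exp (lam * ψ t x)))
          ≤ s * (2 * (Eexp * (lam * (K * δ)))) := mul_le_mul_of_nonneg_left h2 hs.le
      linarith
    have hlin : 2 * lam * (ψ τ X - ψ t x) ≤ 2 * lam * (K * δ) := by
      linarith [mul_le_mul_of_nonneg_left habs.2 (by linarith : (0:ℝ) ≤ 2 * lam)]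
    have hE' : 2 * lam * (K * δ) ≤ 2 * lam * K * Eexp * δ := by
      linarith [mul_le_mul_of_nonneg_left hEexp1 (by positivity : (0:ℝ) ≤ 2 * lam * K * δ)]
    linarith
  rw [alephW_eq, alephW_eq]
  have hA : ((θ t)^2)⁻¹ ≤ 4 * ((θ τ)^2)⁻¹ := by
    have h1 : ((θ t)^2)⁻¹ ≤ 1 := by
      rw [inv_le_one_iff₀]; right; nlinarith
    have h2 : (4:ℝ)⁻¹ ≤ ((θ τ)^2)⁻¹ := by
      apply inv_anti₀ (by positivity) (by nlinarith)
    linarith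
  have hexp : Real.exp (s * phiW θ ψ m lam t x - 2*(lam * ψ t x))
      ≤ Real.exp (2 * (s+1) * lam * K * Eexp * δ)
        * Real.exp (s * phiW θ ψ m lam τ X - 2*(lam * ψ τ X)) := by
    rw [← Real.exp_add]
    exact Real.exp_le_exp.mpr hexpineq
  calc ((θ t)^2)⁻¹ * Real.exp (s * phiW θ ψ m lam t x - 2*(lam * ψ t x))
      ≤ (4 * ((θ τ)^2)⁻¹) * (Real.exp (2 * (s+1) * lam * K * Eexp * δ)
        * Real.exp (s * phiW θ ψ m lam τ X - 2*(lam * ψ τ X))) := by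
        apply mul_le_mul hA hexp (by positivity) (by positivity)
    _ = 4 * Real.exp (2 * (s+1) * lam * K * Eexp * δ)
        * (((θ τ)^2)⁻¹ * Real.exp (s * phiW θ ψ m lam τ X - 2*(lam * ψ τ X))) := by ring
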